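/- Let Z be a tail and W, W' subcurves of a nodal curve C. If Z is contained in W ∧ W', then Term_Z ∩ (Term_W ∪ Term_{W'}) is contained in Term_{W∧W'}. -/
import Mathlib


open Set

/- Dual multigraph model of a nodal curve: vertices `V` are irreducible
components, edges `E` are nodes, with endpoint maps `s t : E → V`. -/

/-- The set of terminal points (edges of the cut) of a vertex subset `Z`. -/
def TermPts {V E : Type} (s t : E → V) (Z : Set V) : Set E :=
  {e | (s e ∈ Z ∧ t e ∉ Z) ∨ (t e ∈ Z ∧ s e ∉ Z)}

/-- A subcurve is a nonempty proper subset of the components. -/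
def Subcurve {V : Type} (Z : Set V) : Prop := Z.Nonempty ∧ Z ≠ Set.univ

/-- Connectivity of the induced sub-multigraph on `Z`. -/
def ConnOn {V E : Type} (s t : E → V) (Z : Set V) : Prop :=
  ∀ x ∈ Z, ∀ y ∈ Z,
    Relation.ReflTransGen
      (fun a b => a ∈ Z ∧ b ∈ Z ∧ ∃ e, (s e = a ∧ t e = b) ∨ (s e = b ∧ t e = a)) x y

/-- A tail is a subcurve with both sides connected. -/
def IsTail {V E : Type} (s t : E → V) (Z : Set V) : Prop :=
  Subcurve Z ∧ ConnOn s t Z ∧ ConnOn s t Zᶜ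

/-- `k_Z`, the number of terminal points of `Z`. -/
noncomputable def kcut {V E : Type} (s t : E → V) (Z : Set V) : ℕ :=
  (TermPts s t Z).ncard

/-- The pair `(Z, Z')` is free if the edge cuts are disjoint. -/
def FreePair {V E : Type} (s t : E → V) (Z Z' : Set V) : Prop :=
  TermPts s t Z ∩ TermPts s t Z' = ∅

/-- The pair `(Z, Z')` is perfect. -/
def PerfectPair {V : Type} (Z Z' : Set V) : Prop :=
  Z ⊆ Z' ∨ Z' ⊆ Z ∨ Zᶜ ⊆ Z' ∨ Z' ⊆ Zᶜ

/-- Lemma 3.2 (iii): if `Z` is a tail contained in `W ∧ W'`, then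
`Term_Z ∩ (Term_W ∪ Term_{W'}) ⊆ Term_{W∧W'}`. -/
theorem stmt_3 {V E : Type} [Fintype V] [Fintype E] (s t : E → V)
    (hC : ConnOn s t Set.univ) (Z W W' : Set V)
    (hZ : IsTail s t Z) (hW : Subcurve W) (hW' : Subcurve W')
    (h : Z ⊆ W ∩ W') :
    TermPts s t Z ∩ (TermPts s t W ∪ TermPts s t W') ⊆ TermPts s t (W ∩ W') := by
  rintro e ⟨hZe, hWe⟩
  have hs := @h (s e)
  have ht := @h (t e)
  simp only [TermPts, Set.mem_setOf_eq, Set.mem_inter_iff, Set.mem_union] at *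
  tauto
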